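/- Let L be a real symmetric positive semidefinite n×n matrix whose kernel is exactly span{1_n}, with second smallest eigenvalue λ_2 > 0 and largest eigenvalue λ_n > λ_2. Define c_1 = (1 + λ_2/λ_n)/(1 − λ_2/λ_n), c_2 = 2/((1 + λ_2/λ_n)·λ_n), and P_k(x) = 1 − T_k(c_1(1−x))/T_k(c_1) for k ≥ 1. Then the kernel of the matrix P_k(c_2·L) equals span{1_n}. -/

import Mathlib

def chebR {R : Type*} [Ring R] : ℕ → R → R
  | 0, _ => 1
  | 1, x => x
  | (k + 2), x => 2 * x * chebR (k + 1) x - chebR k x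

lemma chebR_eq_T (x : ℝ) : ∀ k : ℕ, chebR k x = (Polynomial.Chebyshev.T ℝ k).eval x := by
  have H : ∀ k : ℕ, chebR k x = (Polynomial.Chebyshev.T ℝ k).eval x ∧
      chebR (k+1) x = (Polynomial.Chebyshev.T ℝ (k+1)).eval x := by
    intro k
    induction k with
    | zero => simp [chebR, Polynomial.Chebyshev.T_zero, Polynomial.Chebyshev.T_one]
    | succ k ih =>
      refine ⟨ih.2, ?_⟩
      rw [show chebR (k+1+1) x = 2 * x * chebR (k+1) x - chebR k x from rfl,
        show ((k+1:ℕ)+1 : ℤ) = (k:ℤ) + 2 by push_cast; ring,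
        Polynomial.Chebyshev.T_add_two]
      simp [ih.1, ih.2]
  exact fun k => (H k).1

lemma chebR_abs_le {x : ℝ} (hx : |x| ≤ 1) (k : ℕ) : |chebR k x| ≤ 1 := by
  obtain ⟨h1, h2⟩ := abs_le.mp hx
  rw [chebR_eq_T, ← Real.cos_arccos h1 h2, Polynomial.Chebyshev.T_real_cos]
  exact Real.abs_cos_le_one _

lemma chebR_aux {x : ℝ} (hx : 1 ≤ x) :
    ∀ k : ℕ, 1 ≤ chebR k x ∧ chebR k x ≤ chebR (k+1) x := by
  intro k
  induction k with
  | zero => exact ⟨le_refl _, by rw [show chebR 0 x = 1 from rfl, show chebR 1 x = x from rfl]; exact hx⟩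
  | succ k ih =>
    obtain ⟨h1, h2⟩ := ih
    have h3 : 1 ≤ chebR (k+1) x := h1.trans h2
    refine ⟨h3, ?_⟩
    rw [show chebR (k+1+1) x = 2 * x * chebR (k+1) x - chebR k x from rfl]
    nlinarith

lemma one_lt_chebR {x : ℝ} (hx : 1 < x) {k : ℕ} (hk : 1 ≤ k) : 1 < chebR k x := by
  have H : ∀ j : ℕ, x ≤ chebR (j+1) x := by
    intro j
    induction j with
    | zero => exact le_of_eq rfl
    | succ j ih => exact ih.trans (chebR_aux hx.le (j+1)).2
  obtain ⟨j, rfl⟩ := Nat.exists_eq_add_of_le hk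
  exact lt_of_lt_of_le hx (by simpa [Nat.add_comm] using H j)

open Matrix in
lemma chebR_mulVec {n : ℕ} (A : Matrix (Fin n) (Fin n) ℝ) (t : ℝ) (v : Fin n → ℝ)
    (h : A.mulVec v = t • v) : ∀ k : ℕ, (chebR k A).mulVec v = chebR k t • v := by
  have H : ∀ k : ℕ, (chebR k A).mulVec v = chebR k t • v ∧
      (chebR (k+1) A).mulVec v = chebR (k+1) t • v := by
    intro k
    induction k with
    | zero =>
      constructor
      · rw [show chebR 0 A = 1 from rfl, one_mulVec, show chebR 0 t = 1 from rfl, one_smul]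
      · rw [show chebR 1 A = A from rfl, h, show chebR 1 t = t from rfl]
    | succ k ih =>
      obtain ⟨h1, h2⟩ := ih
      refine ⟨h2, ?_⟩
      rw [show chebR (k+1+1) A = 2 * A * chebR (k+1) A - chebR k A from rfl,
        sub_mulVec, mul_assoc, two_mul, add_mulVec, ← mulVec_mulVec, h2, mulVec_smul, h,
        h1, show chebR (k+1+1) t = 2 * t * chebR (k+1) t - chebR k t from rfl]
      ext i
      simp
      ring
  exact fun k => (H k).1

open Matrix

theorem stmt6 {n : ℕ} (L : Matrix (Fin n) (Fin n) ℝ)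
    (hsymm : L.IsSymm) (hpsd : L.PosSemidef)
    (hker : ∀ v : Fin n → ℝ, L.mulVec v = 0 ↔ ∃ a : ℝ, v = fun _ => a)
    (lam2 lamn : ℝ) (h2 : 0 < lam2) (h2n : lam2 < lamn)
    (heig : ∀ μ : ℝ, (∃ v : Fin n → ℝ, v ≠ 0 ∧ L.mulVec v = μ • v) →
      μ = 0 ∨ (lam2 ≤ μ ∧ μ ≤ lamn))
    (c₁ c₂ : ℝ)
    (hc₁ : c₁ = (1 + lam2 / lamn) / (1 - lam2 / lamn))
    (hc₂ : c₂ = 2 / ((1 + lam2 / lamn) * lamn))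
    (k : ℕ) (hk : 1 ≤ k)
    (PkL : Matrix (Fin n) (Fin n) ℝ)
    (hPkL : PkL = (1 : Matrix (Fin n) (Fin n) ℝ)
      - (chebR k c₁)⁻¹ • chebR k (c₁ • ((1 : Matrix (Fin n) (Fin n) ℝ) - c₂ • L))) :
    ∀ v : Fin n → ℝ, PkL.mulVec v = 0 ↔ ∃ a : ℝ, v = fun _ => a := by
  have hH : L.IsHermitian := hpsd.1
  have hlamn : (0:ℝ) < lamn := h2.trans h2n
  have hr1 : lam2 / lamn < 1 := (div_lt_one hlamn).mpr h2n
  have hr0 : 0 < lam2 / lamn := div_pos h2 hlamn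
  have hc₁gt : 1 < c₁ := by
    rw [hc₁, lt_div_iff₀ (by linarith)]; linarith
  have hTc : 1 < chebR k c₁ := one_lt_chebR hc₁gt hk
  have hTcne : chebR k c₁ ≠ 0 := by linarith
  -- action of PkL on eigenvectors of L
  have hMact : ∀ (x : Fin n → ℝ) (m : ℝ), L *ᵥ x = m • x →
      (c₁ • ((1 : Matrix (Fin n) (Fin n) ℝ) - c₂ • L)) *ᵥ x = (c₁ * (1 - c₂ * m)) • x := by
    intro x m hx
    rw [smul_mulVec, sub_mulVec, one_mulVec, smul_mulVec, hx]
    ext i; simp; ring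
  have hPact : ∀ (x : Fin n → ℝ) (m : ℝ), L *ᵥ x = m • x →
      PkL *ᵥ x = (1 - (chebR k c₁)⁻¹ * chebR k (c₁ * (1 - c₂ * m))) • x := by
    intro x m hx
    rw [hPkL, sub_mulVec, one_mulVec, smul_mulVec,
      chebR_mulVec _ _ _ (hMact x m hx), smul_smul]
    ext i; simp; ring
  -- nonvanishing of the coefficient for eigenvalues in [lam2, lamn]
  have hdne : ∀ m : ℝ, lam2 ≤ m → m ≤ lamn →
      (1 - (chebR k c₁)⁻¹ * chebR k (c₁ * (1 - c₂ * m))) ≠ 0 := by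
    intro m hm1 hm2 hc
    have hne1 : lamn - lam2 ≠ 0 := by linarith
    have hne2 : lamn + lam2 ≠ 0 := by linarith
    have hne3 : lamn ≠ 0 := hlamn.ne'
    have ht : c₁ * (1 - c₂ * m) = (lamn + lam2 - 2*m) / (lamn - lam2) := by
      rw [hc₁, hc₂]; field_simp
    have habs : |c₁ * (1 - c₂ * m)| ≤ 1 := by
      rw [ht, abs_div, abs_of_pos (by linarith : (0:ℝ) < lamn - lam2), div_le_one (by linarith)]
      rw [abs_le]; constructor <;> linarith
    have h1 := (abs_le.mp (chebR_abs_le habs k)).2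
    have h5 : (chebR k c₁)⁻¹ * chebR k (c₁ * (1 - c₂ * m)) = 1 := by linarith
    have h4 : chebR k (c₁ * (1 - c₂ * m)) = chebR k c₁ := by
      calc chebR k (c₁ * (1 - c₂ * m))
          = chebR k c₁ * ((chebR k c₁)⁻¹ * chebR k (c₁ * (1 - c₂ * m))) := by
            rw [← mul_assoc, mul_inv_cancel₀ hTcne, one_mul]
        _ = chebR k c₁ := by rw [h5, mul_one]
    linarith
  intro v
  constructor
  · -- hard direction
    intro hv
    classical
    set U : Matrix (Fin n) (Fin n) ℝ := (hH.eigenvectorUnitary : Matrix (Fin n) (Fin n) ℝ) with hU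
    have hsU : star U * U = 1 := Unitary.coe_star_mul_self hH.eigenvectorUnitary
    have hUs : U * star U = 1 := (Matrix.mem_unitaryGroup_iff).mp hH.eigenvectorUnitary.2
    set u := star U *ᵥ v with hu
    have hveq : v = U *ᵥ u := by rw [hu, mulVec_mulVec, hUs, one_mulVec]
    have mulU : ∀ (Q : Matrix (Fin n) (Fin n) ℝ) (e : Fin n → ℝ),
        (∀ j, Q *ᵥ ⇑(hH.eigenvectorBasis j) = e j • ⇑(hH.eigenvectorBasis j)) →
        Q * U = U * diagonal e := by
      intro Q e hQ
      ext i j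
      have h := congrFun (hQ j) i
      simp only [Matrix.mulVec, dotProduct, Pi.smul_apply, smul_eq_mul] at h
      rw [Matrix.mul_apply, Matrix.mul_diagonal]
      calc ∑ l, Q i l * U l j = ∑ l, Q i l * (hH.eigenvectorBasis j) l := by
            simp [hU]
        _ = e j * (hH.eigenvectorBasis j) i := h
        _ = U i j * e j := by rw [mul_comm]; simp [hU]
    set d : Fin n → ℝ :=
      fun j => 1 - (chebR k c₁)⁻¹ * chebR k (c₁ * (1 - c₂ * hH.eigenvalues j)) with hd
    have hLU : L * U = U * diagonal hH.eigenvalues :=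
      mulU L _ fun j => hH.mulVec_eigenvectorBasis j
    have hPU : PkL * U = U * diagonal d :=
      mulU PkL d fun j => hPact _ _ (hH.mulVec_eigenvectorBasis j)
    have hDu : diagonal d *ᵥ u = 0 := by
      have h0 : U *ᵥ (diagonal d *ᵥ u) = 0 := by
        rw [mulVec_mulVec, ← hPU, ← mulVec_mulVec, ← hveq, hv]
      have h1 : star U *ᵥ (U *ᵥ (diagonal d *ᵥ u)) = star U *ᵥ 0 := by rw [h0]
      rwa [mulVec_mulVec (diagonal d *ᵥ u) (star U) U, hsU, one_mulVec, mulVec_zero] at h1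
    have hbne : ∀ j, ⇑(hH.eigenvectorBasis j) ≠ (0 : Fin n → ℝ) := by
      intro j hcon
      exact hH.eigenvectorBasis.orthonormal.ne_zero j (by ext i; exact congrFun hcon i)
    have hmu : ∀ i, hH.eigenvalues i * u i = 0 := by
      intro i
      rcases heig (hH.eigenvalues i) ⟨_, hbne i, hH.mulVec_eigenvectorBasis i⟩ with h0 | ⟨ha, hb⟩
      · rw [h0, zero_mul]
      · have hdi := congrFun hDu i
        rw [mulVec_diagonal] at hdi
        rcases mul_eq_zero.mp hdi with h' | h'
        · exact absurd h' (hdne _ ha hb)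
        · rw [h', mul_zero]
    have hLv : L *ᵥ v = 0 := by
      rw [hveq, mulVec_mulVec, hLU, ← mulVec_mulVec]
      have : diagonal hH.eigenvalues *ᵥ u = 0 := by
        ext i; rw [mulVec_diagonal]; exact hmu i
      rw [this, mulVec_zero]
    exact (hker v).mp hLv
  · rintro ⟨a, rfl⟩
    have hLv : L *ᵥ (fun _ => a) = (0:ℝ) • (fun _ => a : Fin n → ℝ) := by
      rw [(hker _).mpr ⟨a, rfl⟩]; simp
    rw [hPact _ 0 hLv]
    have : (1 : ℝ) - (chebR k c₁)⁻¹ * chebR k (c₁ * (1 - c₂ * 0)) = 0 := by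
      rw [mul_zero, sub_zero, mul_one, inv_mul_cancel₀ hTcne, sub_self]
    rw [this, zero_smul]
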